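/- The simple $s$-$2$-cluster $C_s$ (union of $s$ copies of $K_k$, $k\ge 3$, pairwise intersecting in one fixed pair of vertices) is balanced: every subgraph $H\subseteq C_s$ satisfies $e(H)/v(H) \le e(C_s)/v(C_s)$. -/

import Mathlib

open scoped Classical

/-- The "block" of a vertex of the simple `s`-`2`-cluster. -/
def blk {s k : ℕ} : Sum (Fin 2) (Fin s × Fin (k - 2)) → Option (Fin s)
  | Sum.inl _ => none
  | Sum.inr x => some x.1

/-- The simple `s`-`2`-cluster `C_s`: union of `s` copies of `K_k` all sharing the
same two (hub) vertices and otherwise pairwise disjoint. -/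
def cluster (s k : ℕ) : SimpleGraph (Sum (Fin 2) (Fin s × Fin (k - 2))) where
  Adj u v := u ≠ v ∧ (blk u = none ∨ blk v = none ∨ blk u = blk v)
  symm := by
    refine ⟨?_⟩
    rintro u v ⟨h1, h2⟩
    exact ⟨h1.symm, by tauto⟩
  loopless := by
    refine ⟨?_⟩
    rintro u ⟨h, -⟩
    exact h rfl

lemma cluster_adj {s k : ℕ} {u v : Sum (Fin 2) (Fin s × Fin (k - 2))} :
    (cluster s k).Adj u v ↔ u ≠ v ∧ (blk u = none ∨ blk v = none ∨ blk u = blk v) :=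
  Iff.rfl

lemma keyblock (s c a b : ℕ) (hs : 1 ≤ s) (hc : 1 ≤ c) (ha : a ≤ 2) (hb : b ≤ c) :
    s*((2+s*c)*(b*b + 2*a*b)) + (2+s*c)*(a*a)
      ≤ s*((2+s*c*(c+3))*b) + (2+s*c*(c+3))*a + s*((2+s*c)*b) + (2+s*c)*a := by
  obtain ⟨e, rfl⟩ := Nat.exists_eq_add_of_le hb
  have hse : b + e ≤ s * (b + e) := Nat.le_mul_of_pos_left _ hs
  have h1 : 2*b ≤ s*((b+e)*(e+2)) := by
    calc 2*b ≤ 1*((b+e)*(e+2)) := by nlinarith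
    _ ≤ s*((b+e)*(e+2)) := Nat.mul_le_mul_right _ hs
  have h3 : (2+s*(b+e))*b ≤ (2+s*(b+e)*(b+e+3)) + (2+s*(b+e)) := by
    nlinarith [Nat.mul_le_mul_left (s*(b+e)) hb, hse]
  have h6 : s*(b*(2*b+4)) ≤ s*(2*((b+e)*(b+e+2))) := by
    apply Nat.mul_le_mul_left; nlinarith
  interval_cases a
  · nlinarith [Nat.mul_le_mul_left (s*b) h3]
  · nlinarith [Nat.mul_le_mul_left (s*b) h1]
  · nlinarith [h6, Nat.mul_le_mul_left (s*b) h1]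

lemma keysum (s c a : ℕ) (b : Fin s → ℕ) (hs : 1 ≤ s) (hc : 1 ≤ c) (ha : a ≤ 2)
    (hb : ∀ i, b i ≤ c) :
    (2+s*c) * (a*(a + ∑ i, b i) + ∑ i, b i*(a + b i))
      ≤ (2+s*c*(c+3)) * (a + ∑ i, b i) + (2+s*c) * (a + ∑ i, b i) := by
  have hsum := Finset.sum_le_sum (fun i (_ : i ∈ Finset.univ) =>
    keyblock s c a (b i) hs hc ha (hb i))
  have e1 : ∀ i : Fin s, s*((2+s*c)*(b i*b i + 2*a*b i)) + (2+s*c)*(a*a)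
      = (s*(2+s*c))*(b i*b i) + (s*(2+s*c)*(2*a))*(b i) + (2+s*c)*(a*a) := fun i => by ring
  have e2 : ∀ i : Fin s, s*((2+s*c*(c+3))*(b i)) + (2+s*c*(c+3))*a + s*((2+s*c)*(b i)) + (2+s*c)*a
      = (s*(2+s*c*(c+3)) + s*(2+s*c))*(b i) + ((2+s*c*(c+3))*a + (2+s*c)*a) := fun i => by ring
  simp only [e1, e2, Finset.sum_add_distrib, ← Finset.mul_sum, Finset.sum_const,
    Finset.card_univ, Fintype.card_fin, smul_eq_mul] at hsum
  have e0 : (∑ i, b i*(a + b i)) = a*(∑ i, b i) + ∑ i, b i*b i := by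
    simp only [mul_add, Finset.sum_add_distrib, ← Finset.sum_mul, ← Finset.mul_sum]
    ring
  rw [e0]
  refine Nat.le_of_mul_le_mul_left ?_ (show 0 < s from hs)
  nlinarith [hsum]

section counting
variable (s k : ℕ)

-- card of type
lemma card_Vt : Fintype.card (Sum (Fin 2) (Fin s × Fin (k-2))) = 2 + s * (k-2) := by
  simp

-- split of any finset by blocks
lemma card_split (S : Finset (Sum (Fin 2) (Fin s × Fin (k-2)))) :
    S.card = (S.filter fun v => blk v = none).card
      + ∑ i : Fin s, (S.filter fun v => blk v = some i).card := by
  rw [Finset.card_eq_sum_card_fiberwise (f := blk) (t := Finset.univ) (fun x _ => Finset.mem_univ _)]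
  rw [Fintype.sum_option]

lemma hubs_le (S : Finset (Sum (Fin 2) (Fin s × Fin (k-2)))) :
    (S.filter fun v => blk v = none).card ≤ 2 := by
  have hsub : (S.filter fun v => blk v = none) ⊆ {Sum.inl 0, Sum.inl 1} := by
    intro v hv
    rcases Finset.mem_filter.mp hv with ⟨-, h⟩
    match v with
    | Sum.inl j => fin_cases j <;> simp
    | Sum.inr x => simp [blk] at h
  calc _ ≤ ({Sum.inl 0, Sum.inl 1} : Finset _).card := Finset.card_le_card hsub
  _ ≤ 2 := Finset.card_insert_le _ _ |>.trans (by simp)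

lemma blkc_le (S : Finset (Sum (Fin 2) (Fin s × Fin (k-2)))) (i : Fin s) :
    (S.filter fun v => blk v = some i).card ≤ k - 2 := by
  have hsub : (S.filter fun v => blk v = some i)
      ⊆ (Finset.univ.image fun x : Fin (k-2) => (Sum.inr (i, x) : Sum (Fin 2) (Fin s × Fin (k-2)))) := by
    intro v hv
    rcases Finset.mem_filter.mp hv with ⟨-, h⟩
    match v with
    | Sum.inl j => simp [blk] at h
    | Sum.inr x =>
      simp only [blk, Option.some_inj] at h
      subst h
      exact Finset.mem_image.mpr ⟨x.2, Finset.mem_univ _, rfl⟩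
  calc _ ≤ _ := Finset.card_le_card hsub
  _ ≤ (Finset.univ : Finset (Fin (k-2))).card := Finset.card_image_le
  _ = k - 2 := by simp

end counting

section counting2
variable (s k : ℕ)

lemma count_le (H : (cluster s k).Subgraph) :
    2 * H.edgeSet.ncard + H.verts.toFinset.card ≤
      (H.verts.toFinset.filter fun v => blk v = none).card * H.verts.toFinset.card
      + ∑ i : Fin s, (H.verts.toFinset.filter fun v => blk v = some i).card *
          ((H.verts.toFinset.filter fun v => blk v = none).card
            + (H.verts.toFinset.filter fun v => blk v = some i).card) := by
  classical
  set S := H.verts.toFinset with hS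
  set a := (S.filter fun v => blk v = none).card with havals
  set b := fun i : Fin s => (S.filter fun v => blk v = some i).card with hbvals
  set G' := H.spanningCoe with hG'
  -- edge count via degrees
  have hedge : H.edgeSet.ncard = G'.edgeFinset.card := by
    have : G'.edgeSet = H.edgeSet := rfl
    rw [SimpleGraph.edgeFinset, ← this, Set.ncard_eq_toFinset_card']
  have hdegsum : ∑ v, G'.degree v = 2 * G'.edgeFinset.card :=
    SimpleGraph.sum_degrees_eq_twice_card_edges G'
  -- degrees vanish off S
  have hzero : ∀ v ∉ S, G'.degree v = 0 := by
    intro v hv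
    rw [← SimpleGraph.card_neighborFinset_eq_degree, Finset.card_eq_zero]
    ext w
    simp only [SimpleGraph.mem_neighborFinset, Finset.notMem_empty, iff_false]
    intro hadj
    exact hv (by rw [hS, Set.mem_toFinset]; exact hadj.fst_mem)
  have hsum1 : ∑ v, G'.degree v = ∑ v ∈ S, G'.degree v :=
    (Finset.sum_subset (Finset.subset_univ S) fun v _ hv => hzero v hv).symm
  -- per-vertex bound
  set w : Sum (Fin 2) (Fin s × Fin (k-2)) → ℕ :=
    fun v => (blk v).elim S.card (fun i => a + b i) with hw
  have hvert : ∀ v ∈ S, G'.degree v + 1 ≤ w v := by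
    intro v hv
    rw [← SimpleGraph.card_neighborFinset_eq_degree]
    have hnotmem : v ∉ G'.neighborFinset v := SimpleGraph.notMem_neighborFinset_self _ _
    rw [← Finset.card_insert_of_notMem hnotmem]
    cases hblk : blk v with
    | none =>
      have hsub : insert v (G'.neighborFinset v) ⊆ S := by
        intro u hu
        rcases Finset.mem_insert.mp hu with rfl | hu
        · exact hv
        · rw [SimpleGraph.mem_neighborFinset] at hu
          rw [hS, Set.mem_toFinset]
          exact (hu : H.Adj v u).snd_mem
      simpa [hw, hblk] using Finset.card_le_card hsub
    | some i =>
      have hsub : insert v (G'.neighborFinset v)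
          ⊆ S.filter fun u => blk u = none ∨ blk u = some i := by
        intro u hu
        rcases Finset.mem_insert.mp hu with rfl | hu
        · exact Finset.mem_filter.mpr ⟨hv, Or.inr hblk⟩
        · rw [SimpleGraph.mem_neighborFinset] at hu
          have hadj : H.Adj v u := hu
          refine Finset.mem_filter.mpr ⟨by rw [hS, Set.mem_toFinset]; exact hadj.snd_mem, ?_⟩
          rcases (cluster_adj.mp hadj.adj_sub).2 with h | h | h
          · rw [hblk] at h; exact absurd h (by simp)
          · exact Or.inl h
          · rw [hblk] at h; exact Or.inr h.symm
      have hcard : (S.filter fun u => blk u = none ∨ blk u = some i).card = a + b i := by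
        rw [Finset.filter_or, Finset.card_union_of_disjoint]
        rw [Finset.disjoint_left]
        intro u hu1 hu2
        rw [Finset.mem_filter] at hu1 hu2
        rw [hu1.2] at hu2
        exact absurd hu2.2 (by simp)
      calc _ ≤ _ := Finset.card_le_card hsub
      _ = a + b i := hcard
      _ = w v := by simp [hw, hblk]
  -- sum the bound, fiberwise
  have hfsum : ∑ v ∈ S, w v = a * S.card + ∑ i : Fin s, b i * (a + b i) := by
    rw [← Finset.sum_fiberwise S blk w, Fintype.sum_option]
    congr 1
    · rw [Finset.sum_const_nat (m := S.card)
        (fun v hv => by simp [hw, (Finset.mem_filter.mp hv).2])]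
    · refine Finset.sum_congr rfl fun i _ => ?_
      rw [Finset.sum_const_nat (m := a + b i)
        (fun v hv => by simp [hw, (Finset.mem_filter.mp hv).2])]
  calc 2 * H.edgeSet.ncard + S.card
      = ∑ v ∈ S, G'.degree v + ∑ v ∈ S, 1 := by
        rw [hedge, ← hdegsum, hsum1, Finset.sum_const, smul_eq_mul, mul_one]
    _ = ∑ v ∈ S, (G'.degree v + 1) := (Finset.sum_add_distrib).symm
    _ ≤ ∑ v ∈ S, w v := Finset.sum_le_sum hvert
    _ = a * S.card + ∑ i : Fin s, b i * (a + b i) := hfsum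

end counting2

set_option maxHeartbeats 1600000 in
lemma full_lb (s k : ℕ) (hk : 3 ≤ k) (hs : 1 ≤ s) :
    2 + s*(k-2)*(k+1) ≤ 2 * (cluster s k).edgeSet.ncard := by
  classical
  set G := cluster s k with hG
  have hedge : G.edgeSet.ncard = G.edgeFinset.card := by
    rw [SimpleGraph.edgeFinset, Set.ncard_eq_toFinset_card']
  have hdegsum : ∑ v, G.degree v = 2 * G.edgeFinset.card :=
    SimpleGraph.sum_degrees_eq_twice_card_edges G
  have hhub : ∀ j : Fin 2, 1 + s * (k-2) ≤ G.degree (Sum.inl j) := by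
    intro j
    rw [← SimpleGraph.card_neighborFinset_eq_degree]
    have hsub : Finset.univ.erase (Sum.inl j) ⊆ G.neighborFinset (Sum.inl j) := by
      intro u hu
      rw [SimpleGraph.mem_neighborFinset, hG, cluster_adj]
      exact ⟨(Finset.mem_erase.mp hu).1.symm, Or.inl rfl⟩
    calc 1 + s * (k-2) = Fintype.card (Sum (Fin 2) (Fin s × Fin (k-2))) - 1 := by
          rw [card_Vt]; omega
      _ = (Finset.univ.erase (Sum.inl j)).card := by
          rw [Finset.card_erase_of_mem (Finset.mem_univ _), Finset.card_univ, card_Vt]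
      _ ≤ _ := Finset.card_le_card hsub
  have hblkdeg : ∀ p : Fin s × Fin (k-2), k - 1 ≤ G.degree (Sum.inr p) := by
    intro p
    rw [← SimpleGraph.card_neighborFinset_eq_degree]
    set T0 : Finset (Sum (Fin 2) (Fin s × Fin (k-2))) :=
      (Finset.univ.image fun y : Fin (k-2) => (Sum.inr (p.1, y) :
          Sum (Fin 2) (Fin s × Fin (k-2)))).erase (Sum.inr p) with hT0
    have hsub : insert (Sum.inl 0) (insert (Sum.inl 1) T0) ⊆ G.neighborFinset (Sum.inr p) := by
      intro u hu
      rw [SimpleGraph.mem_neighborFinset, hG, cluster_adj]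
      rw [Finset.mem_insert, Finset.mem_insert] at hu
      rcases hu with rfl | rfl | hu
      · exact ⟨by simp, Or.inr (Or.inl rfl)⟩
      · exact ⟨by simp, Or.inr (Or.inl rfl)⟩
      · rw [hT0] at hu
        rcases Finset.mem_erase.mp hu with ⟨hne, hmem⟩
        rcases Finset.mem_image.mp hmem with ⟨y, -, rfl⟩
        exact ⟨fun h => hne h.symm, Or.inr (Or.inr rfl)⟩
    have hc0 : T0.card = k - 2 - 1 := by
      rw [hT0, Finset.card_erase_of_mem
        (Finset.mem_image.mpr ⟨p.2, Finset.mem_univ _, rfl⟩),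
        Finset.card_image_of_injective _ (fun y y' h => by simpa using h)]
      simp
    have hc1 : (insert (Sum.inl 0) (insert (Sum.inl 1) T0)).card = k - 1 := by
      rw [Finset.card_insert_of_notMem (by
          rw [hT0]; simp
          ),
        Finset.card_insert_of_notMem (by rw [hT0]; simp), hc0]
      omega
    calc k - 1 = _ := hc1.symm
      _ ≤ _ := Finset.card_le_card hsub
  obtain ⟨c, rfl⟩ := Nat.exists_eq_add_of_le hk
  have e2 : 3 + c - 2 = c + 1 := by omega
  have e1 : 3 + c - 1 = c + 2 := by omega
  have hA : 2*(1+s*(3+c-2)) ≤ ∑ j : Fin 2, G.degree (Sum.inl j) := by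
    calc 2*(1+s*(3+c-2)) = ∑ _j : Fin 2, (1+s*(3+c-2)) := by
          rw [Finset.sum_const, Finset.card_univ, Fintype.card_fin, smul_eq_mul]
      _ ≤ _ := Finset.sum_le_sum fun j _ => hhub j
  have hB : (s*(3+c-2))*(3+c-1) ≤ ∑ p : Fin s × Fin (3+c-2), G.degree (Sum.inr p) := by
    calc (s*(3+c-2))*(3+c-1) = ∑ _p : Fin s × Fin (3+c-2), (3+c-1) := by
          rw [Finset.sum_const, Finset.card_univ, Fintype.card_prod, Fintype.card_fin,
            Fintype.card_fin, smul_eq_mul]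
      _ ≤ _ := Finset.sum_le_sum fun p _ => hblkdeg p
  calc 2 + s*(3+c-2)*(3+c+1)
      ≤ 2*(1+s*(3+c-2)) + (s*(3+c-2))*(3+c-1) := by rw [e1, e2]; nlinarith
    _ ≤ (∑ j : Fin 2, G.degree (Sum.inl j)) + ∑ p : Fin s × Fin (3+c-2), G.degree (Sum.inr p) :=
        add_le_add hA hB
    _ = ∑ v, G.degree v := by rw [Fintype.sum_sum_type]
    _ = 2 * G.edgeSet.ncard := by rw [hedge]; exact hdegsum

theorem stmt1 (s k : ℕ) (hk : 3 ≤ k) (hs : 1 ≤ s)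
    (H : (cluster s k).Subgraph) (hne : H.verts.Nonempty) :
    (H.edgeSet.ncard : ℚ) / (H.verts.ncard : ℚ) ≤
      ((cluster s k).edgeSet.ncard : ℚ) /
        (Fintype.card (Sum (Fin 2) (Fin s × Fin (k - 2))) : ℚ) := by
  classical
  have hn : H.verts.ncard = H.verts.toFinset.card := Set.ncard_eq_toFinset_card' _
  set S := H.verts.toFinset with hS
  set a := (S.filter fun v => blk v = none).card with ha
  set b := fun i : Fin s => (S.filter fun v => blk v = some i).card with hb
  have hn1 : 1 ≤ S.card := Finset.card_pos.mpr (Set.toFinset_nonempty.mpr hne)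
  have hc2 : 1 ≤ k - 2 := by omega
  have hsplit : S.card = a + ∑ i, b i := card_split s k S
  have hcount := count_le s k H
  have hkey := keysum s (k-2) a b hs hc2 (hubs_le s k S) (fun i => blkc_le s k S i)
  have hmain : (2+s*(k-2)) * (2 * H.edgeSet.ncard) ≤ (2+s*(k-2)*(k-2+3)) * S.card := by
    have h1 := Nat.mul_le_mul_left (2+s*(k-2)) hcount
    rw [hsplit]
    rw [hsplit] at h1
    nlinarith [h1, hkey]
  have e32 : k - 2 + 3 = k + 1 := by omega
  rw [e32] at hmain
  have hfin : (2+s*(k-2)) * (2 * H.edgeSet.ncard) ≤ (2 * (cluster s k).edgeSet.ncard) * S.card :=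
    hmain.trans (Nat.mul_le_mul_right _ (full_lb s k hk hs))
  have hfin2 : H.edgeSet.ncard * (2+s*(k-2)) ≤ (cluster s k).edgeSet.ncard * S.card := by
    refine Nat.le_of_mul_le_mul_left ?_ (show 0 < 2 by norm_num)
    calc 2 * (H.edgeSet.ncard * (2+s*(k-2))) = (2+s*(k-2)) * (2 * H.edgeSet.ncard) := by ring
      _ ≤ (2 * (cluster s k).edgeSet.ncard) * S.card := hfin
      _ = 2 * ((cluster s k).edgeSet.ncard * S.card) := by ring
  rw [hn, card_Vt, div_le_div_iff₀ (by exact_mod_cast hn1) (by positivity)]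
  exact_mod_cast hfin2
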